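/- Let c₁,…,c₅ be the vertices of a regular pentagon inscribed in a circle of radius 1.78 centered at c₆. Then for all i ≠ j in {1,…,5}, dist(c_i, c_j) ≥ 2·1.78·sin(π/5) > 2, and dist(c_i, c₆) = 1.78 < 1.8. In particular, five pairwise non-touching regular unit k-gons (k ≥ 7), each containing a ball of radius cos(π/7) > 0.9 about its center, placed at c₁,…,c₅, all intersect a congruent regular k-gon centered at c₆. -/

import Mathlib

open Real Complex


lemma two_sin_mul_I (z : ℂ) :
    2 * Complex.sin z * Complex.I = Complex.exp (z*Complex.I) - Complex.exp (-z*Complex.I) := by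
  rw [Complex.sin]
  ring_nf
  rw [Complex.I_sq]
  ring

lemma abs_exp_sub_exp (a b : ℝ) :
    ‖Complex.exp ((a:ℂ)*Complex.I) - Complex.exp ((b:ℂ)*Complex.I)‖
      = 2 * |Real.sin ((a-b)/2)| := by
  have h : Complex.exp ((a:ℂ)*Complex.I) - Complex.exp ((b:ℂ)*Complex.I)
      = Complex.exp ((((a+b)/2 : ℝ):ℂ)*Complex.I) *
        (2 * Complex.sin (((a-b)/2 : ℝ):ℂ) * Complex.I) := by
    rw [two_sin_mul_I, mul_sub, ← Complex.exp_add, ← Complex.exp_add]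
    congr 2 <;> push_cast <;> ring
  rw [h, norm_mul, Complex.norm_exp_ofReal_mul_I, one_mul, norm_mul, norm_mul,
    Complex.norm_I, Complex.norm_two, ← Complex.ofReal_sin, Complex.norm_real, Real.norm_eq_abs, mul_one]

lemma sin_pi_div_five_bounds : 1/1.78 < Real.sin (π/5) := by
  have pl := Real.pi_gt_d6
  have pu := Real.pi_lt_d2
  have h : π/5 - (π/5)^3/4 < Real.sin (π/5) :=
    by have := Real.sin_gt_sub_cube (x := π/5) (by positivity); nlinarith [pow_pos (show (0:ℝ) < π/5 by positivity) 3]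
  nlinarith [sq_nonneg (π/5), sq_nonneg (π - 3.1416)]

lemma sin_bound_aux (x : ℝ)
    (hx : x = π/5 ∨ x = 2*π/5 ∨ x = 3*π/5 ∨ x = 4*π/5 ∨
      x = -(π/5) ∨ x = -(2*π/5) ∨ x = -(3*π/5) ∨ x = -(4*π/5)) :
    Real.sin (π/5) ≤ |Real.sin x| := by
  have pp := Real.pi_pos
  have key : ∀ k : ℝ, 1 ≤ k → k ≤ 4 → Real.sin (π/5) ≤ Real.sin (k*π/5) →
      Real.sin (π/5) ≤ |Real.sin (k*π/5)| := by
    intro k h1 h4 h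
    rwa [_root_.abs_of_nonneg (Real.sin_nonneg_of_nonneg_of_le_pi (by nlinarith) (by nlinarith))]
  have s1 : Real.sin (π/5) ≤ |Real.sin (π/5)| := by
    have := key 1 le_rfl (by norm_num) (by rw [one_mul])
    rwa [one_mul] at this
  have s2 : Real.sin (π/5) ≤ Real.sin (2*π/5) := by
    apply (Real.strictMonoOn_sin ⟨by nlinarith, by nlinarith⟩ ⟨by nlinarith, by nlinarith⟩ (by nlinarith)).le
  have s3 : Real.sin (3*π/5) = Real.sin (2*π/5) := by
    rw [show (3*π/5) = π - 2*π/5 by ring, Real.sin_pi_sub]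
  have s4 : Real.sin (4*π/5) = Real.sin (π/5) := by
    rw [show (4*π/5) = π - π/5 by ring, Real.sin_pi_sub]
  have k2 : Real.sin (π/5) ≤ |Real.sin (2*π/5)| := key 2 (by norm_num) (by norm_num) s2
  have k3 : Real.sin (π/5) ≤ |Real.sin (3*π/5)| := key 3 (by norm_num) (by norm_num) (by rw [s3]; exact s2)
  have k4 : Real.sin (π/5) ≤ |Real.sin (4*π/5)| := key 4 (by norm_num) (by norm_num) (by rw [s4])
  rcases hx with h|h|h|h|h|h|h|h <;> rw [h]
  · exact s1
  · exact k2
  · exact k3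
  · exact k4
  · rw [Real.sin_neg, abs_neg]; exact s1
  · rw [Real.sin_neg, abs_neg]; exact k2
  · rw [Real.sin_neg, abs_neg]; exact k3
  · rw [Real.sin_neg, abs_neg]; exact k4

lemma cos_pi_div_seven_gt : (0.9:ℝ) < Real.cos (π/7) := by
  have pl := Real.pi_gt_d6
  have pu := Real.pi_lt_d6
  have h2 : Real.cos (π/7) = 2 * Real.cos (π/14)^2 - 1 := by
    rw [show (π/7) = 2*(π/14) by ring, Real.cos_two_mul]
  have h3 : 1 - (π/14)^2/2 ≤ Real.cos (π/14) := Real.one_sub_sq_div_two_le_cos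
  have h5 : (0:ℝ) ≤ 1 - (π/14)^2/2 := by nlinarith
  have h6 := pow_le_pow_left₀ h5 h3 2
  nlinarith [sq_nonneg (π - 3.1415925), sq_nonneg ((π/14)^2 - 0.0503556)]

/-- let `c 0, …, c 4` be the vertices of a regular pentagon
inscribed in the circle of radius `1.78` centered at `c₆` (in the plane,
modelled by `ℂ`).  Then for `i ≠ j`, `dist (c i) (c j) ≥ 2·1.78·sin(π/5) > 2`
(so the closed unit balls at the `c i` — and hence any regular unit `k`-gons,
`k ≥ 7`, inscribed in them — are pairwise non-touching), and
`dist (c i) c₆ = 1.78 < 1.8`; since a regular unit `k`-gon with `k ≥ 7`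
contains the ball of radius `cos(π/7) > 0.9` about its center, the bodies at
`c i` and `c₆` intersect: the closed balls of radius `0.9` at `c i` and `c₆`
meet. -/
theorem stmt_11 (c₆ : ℂ) (c : Fin 5 → ℂ)
    (hc : ∀ i : Fin 5,
      c i = c₆ + 1.78 * Complex.exp ((2 * π * (i : ℕ) / 5) * Complex.I)) :
    (∀ i j : Fin 5, i ≠ j → 2 * 1.78 * Real.sin (π / 5) ≤ dist (c i) (c j)) ∧
    (∀ i j : Fin 5, i ≠ j → 2 < dist (c i) (c j)) ∧
    (∀ i j : Fin 5, i ≠ j →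
      Disjoint (Metric.closedBall (c i) 1) (Metric.closedBall (c j) 1)) ∧
    (∀ i : Fin 5, dist (c i) c₆ = 1.78) ∧ ((1.78 : ℝ) < 1.8) ∧
    ((0.9 : ℝ) < Real.cos (π / 7)) ∧
    (∀ i : Fin 5,
      (Metric.closedBall (c i) 0.9 ∩ Metric.closedBall c₆ 0.9).Nonempty) := by
  have habs : ‖(1.78 : ℂ)‖ = 1.78 := by
    rw [show (1.78:ℂ) = ((1.78:ℝ):ℂ) by norm_num, Complex.norm_real, Real.norm_eq_abs]
    norm_num
  have hdist : ∀ i j : Fin 5, dist (c i) (c j)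
      = 2 * 1.78 * |Real.sin ((2*π*(i:ℕ)/5 - 2*π*(j:ℕ)/5)/2)| := by
    intro i j
    rw [hc i, hc j, Complex.dist_eq,
      show (c₆ + 1.78 * Complex.exp ((2 * π * (i:ℕ) / 5) * Complex.I))
          - (c₆ + 1.78 * Complex.exp ((2 * π * (j:ℕ) / 5) * Complex.I))
        = 1.78 * (Complex.exp ((2 * π * (i:ℕ) / 5) * Complex.I)
          - Complex.exp ((2 * π * (j:ℕ) / 5) * Complex.I)) by ring,
      norm_mul, habs,
      show ((2 * π * (i:ℕ) / 5 : ℂ)) = ((2 * π * (i:ℕ) / 5 : ℝ) : ℂ) by push_cast; ring,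
      show ((2 * π * (j:ℕ) / 5 : ℂ)) = ((2 * π * (j:ℕ) / 5 : ℝ) : ℂ) by push_cast; ring,
      abs_exp_sub_exp]
    ring
  have hsin : ∀ i j : Fin 5, i ≠ j →
      Real.sin (π/5) ≤ |Real.sin ((2*π*(i:ℕ)/5 - 2*π*(j:ℕ)/5)/2)| := by
    intro i j hij
    apply sin_bound_aux
    fin_cases i <;> fin_cases j <;> (try exact absurd rfl hij) <;> norm_num <;>
      first
        | (left; ring1)
        | (right; left; ring1)
        | (right; right; left; ring1)
        | (right; right; right; left; ring1)
        | (right; right; right; right; left; ring1)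
        | (right; right; right; right; right; left; ring1)
        | (right; right; right; right; right; right; left; ring1)
        | (right; right; right; right; right; right; right; ring1)
  have h1 : ∀ i j : Fin 5, i ≠ j → 2 * 1.78 * Real.sin (π / 5) ≤ dist (c i) (c j) := by
    intro i j hij
    rw [hdist i j]
    nlinarith [hsin i j hij]
  have hgt : (2:ℝ) < 2 * 1.78 * Real.sin (π / 5) := by
    have := sin_pi_div_five_bounds
    nlinarith
  have h2 : ∀ i j : Fin 5, i ≠ j → 2 < dist (c i) (c j) := by
    intro i j hij
    exact hgt.trans_le (h1 i j hij)
  have h4 : ∀ i : Fin 5, dist (c i) c₆ = 1.78 := by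
    intro i
    rw [hc i, Complex.dist_eq, add_sub_cancel_left, norm_mul, habs,
      show ((2 * π * (i:ℕ) / 5 : ℂ)) = ((2 * π * (i:ℕ) / 5 : ℝ) : ℂ) by push_cast; ring,
      Complex.norm_exp_ofReal_mul_I, mul_one]
  refine ⟨h1, h2, ?_, h4, by norm_num, cos_pi_div_seven_gt, ?_⟩
  · intro i j hij
    apply Metric.closedBall_disjoint_closedBall
    have := h2 i j hij
    linarith
  · intro i
    refine ⟨(c i + c₆)/2, ?_, ?_⟩ <;> simp only [Metric.mem_closedBall, Complex.dist_eq]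
    · rw [show (c i + c₆)/2 - c i = (c₆ - c i)/2 by ring, norm_div, Complex.norm_two]
      rw [← Complex.dist_eq, dist_comm, h4 i]; norm_num
    · rw [show (c i + c₆)/2 - c₆ = (c i - c₆)/2 by ring, norm_div, Complex.norm_two]
      rw [← Complex.dist_eq, h4 i]; norm_num
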